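/- Let μ_k denote, for each integer k ≥ 1, the unique solution in ((k−1)π, kπ) of 2 cos μ = μ sin μ. Then there exists a constant C > 0 such that for all k ≥ 1, |μ_k − (k−1)π − 2/(kπ)| ≤ C/k². -/

import Mathlib

open Real Set

set_option maxHeartbeats 2000000 in
/-- Asymptotics of the Dirichlet roots: `μ_k = (k−1)π + 2/(kπ) + O(1/k²)`. -/
theorem dirichlet_root_asymptotics (μ : ℕ → ℝ)
    (hμ : ∀ k : ℕ, 1 ≤ k → μ k ∈ Ioo (((k : ℝ) - 1) * π) ((k : ℝ) * π) ∧
      2 * Real.cos (μ k) = μ k * Real.sin (μ k)) :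
    ∃ C > 0, ∀ k : ℕ, 1 ≤ k →
      |μ k - ((k : ℝ) - 1) * π - 2 / ((k : ℝ) * π)| ≤ C / (k : ℝ) ^ 2 := by
  refine ⟨4, by norm_num, ?_⟩
  intro k hk
  obtain ⟨⟨hm1, hm2⟩, heq⟩ := hμ k hk
  clear hμ
  have hπ3 : (3 : ℝ) < π := Real.pi_gt_three
  rcases eq_or_lt_of_le hk with h1 | h2
  · -- k = 1 : crude bound
    subst h1
    have hπ' : π < 3.15 := Real.pi_lt_d2
    push_cast at hm1 hm2 ⊢
    have h1 : 2 / (1 * π) ≤ 1 := by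
      rw [one_mul, div_le_one Real.pi_pos]; linarith
    have h0 : 0 < 2 / (1 * π) := by positivity
    rw [abs_le]
    constructor
    · linarith
    · linarith
  · -- k ≥ 2
    have hk2 : (2 : ℕ) ≤ k := h2
    obtain ⟨n, rfl⟩ : ∃ n : ℕ, k = n + 1 := ⟨k - 1, (Nat.succ_pred_eq_of_pos (by omega)).symm⟩
    have hn1 : (1 : ℕ) ≤ n := by omega
    have hnR : (1 : ℝ) ≤ (n : ℝ) := by exact_mod_cast hn1
    have hcast : ((n + 1 : ℕ) : ℝ) - 1 = (n : ℝ) := by push_cast; ring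
    rw [hcast] at hm1 ⊢
    set m := μ (n + 1) with hm_def
    set δ : ℝ := m - n * π with hδ_def
    clear_value δ m
    have hδ0 : 0 < δ := by rw [hδ_def]; linarith
    have hδπ : δ < π := by
      have h : (↑(n + 1) : ℝ) * π = n * π + π := by push_cast; ring
      rw [h] at hm2; rw [hδ_def]; linarith
    have hmπ : π ≤ m := by
      have h := mul_le_mul_of_nonneg_right hnR Real.pi_pos.le
      rw [one_mul] at h; linarith
    have hmpos : 0 < m := lt_of_lt_of_le Real.pi_pos hmπ
    have h3n : 3 * (n : ℝ) ≤ m := by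
      have h := mul_le_mul_of_nonneg_left hπ3.le (Nat.cast_nonneg (α := ℝ) n)
      linarith
    -- reduce the characteristic equation modulo nπ
    have hcosn : Real.cos ((n : ℝ) * π) = (-1 : ℝ) ^ n := by
      have := Real.cos_nat_mul_pi_sub 0 n
      simpa using this
    have hsinn : Real.sin ((n : ℝ) * π) = 0 := Real.sin_nat_mul_pi n
    have hmδ : m = (n : ℝ) * π + δ := by rw [hδ_def]; ring
    have hcosm : Real.cos m = (-1 : ℝ) ^ n * Real.cos δ := by
      rw [hmδ, Real.cos_add, hcosn, hsinn]; ring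
    have hsinm : Real.sin m = (-1 : ℝ) ^ n * Real.sin δ := by
      rw [hmδ, Real.sin_add, hcosn, hsinn]; ring
    have hne : ((-1 : ℝ) ^ n) ≠ 0 := by
      rcases Nat.even_or_odd n with h | h
      · simp [h.neg_one_pow]
      · simp [h.neg_one_pow]
    have key : 2 * Real.cos δ = m * Real.sin δ := by
      rw [hcosm, hsinm] at heq
      apply mul_left_cancel₀ hne
      linear_combination heq
    clear heq hcosm hsinm hcosn hsinn hne
    have hsinδ : 0 < Real.sin δ := Real.sin_pos_of_pos_of_lt_pi hδ0 hδπ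
    have hcosδ : 0 < Real.cos δ := by
      have := mul_pos hmpos hsinδ; linarith
    -- sin δ ≤ 2/m
    have hmsin : m * Real.sin δ ≤ 2 := by
      have := Real.cos_le_one δ; linarith
    have hsin_le : Real.sin δ ≤ 2 / m := by
      rw [le_div_iff₀ hmpos]
      linarith [mul_comm (Real.sin δ) m]
    -- δ < 1
    have hδhalf : δ < π / 2 := by
      by_contra h
      push_neg at h
      have := Real.cos_nonpos_of_pi_div_two_le_of_le h (by linarith)
      linarith
    have hδ1 : δ < 1 := by
      by_contra h
      push_neg at h
      have h1 : Real.sin 1 ≤ Real.sin δ :=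
        Real.strictMonoOn_sin.monotoneOn ⟨by linarith, by linarith⟩
          ⟨by linarith, hδhalf.le⟩ h
      have h2 : (3:ℝ)/4 < Real.sin 1 := by
        have := Real.sin_gt_sub_cube one_pos
        norm_num at this; linarith
      have h3 : 2 / m ≤ 2 / π := by
        apply div_le_div_of_nonneg_left (by norm_num) Real.pi_pos hmπ
      have h4 : 2 / π < 3 / 4 := by
        rw [div_lt_div_iff₀ Real.pi_pos (by norm_num)]
        linarith
      linarith
    -- δ ≤ 2/(n+1)
    have hk1pos : (0:ℝ) < (n:ℝ) + 1 := by positivity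
    have hδk' : δ ≤ 2 / ((n:ℝ) + 1) := by
      have hs := Real.sin_gt_sub_cube hδ0
      have hcube : δ ^ 3 ≤ δ := by
        nlinarith [mul_nonneg (mul_nonneg hδ0.le (by linarith : (0:ℝ) ≤ 1 - δ))
          (by linarith : (0:ℝ) ≤ 1 + δ)]
      have h1 : δ ≤ 2 / m + δ / 4 := by linarith
      have h2 : (3/4) * δ ≤ 2 / m := by linarith
      rw [le_div_iff₀ hmpos] at h2
      rw [le_div_iff₀ hk1pos]
      nlinarith [mul_nonneg hδ0.le (sub_nonneg.mpr hnR),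
        mul_nonneg hδ0.le (by linarith : (0:ℝ) ≤ m - 3 * (n:ℝ))]
    have hδsq : δ ^ 2 ≤ 4 / ((n:ℝ)+1)^2 := by
      have h0 : -(2 / ((n:ℝ)+1)) ≤ δ := by
        have : (0:ℝ) < 2 / ((n:ℝ)+1) := by positivity
        linarith
      calc δ^2 ≤ (2 / ((n:ℝ)+1))^2 := sq_le_sq' h0 hδk'
        _ = 4 / ((n:ℝ)+1)^2 := by rw [div_pow]; norm_num
    have hq : δ^2 * ((n:ℝ)+1)^2 ≤ 4 := by
      rw [← le_div_iff₀ (by positivity : (0:ℝ) < ((n:ℝ)+1)^2)]; exact hδsq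
    -- lower bound : δ - 2/m ≥ -2/(n+1)²
    have hlow : δ - 2 / m ≥ -(2 / ((n:ℝ)+1)^2) := by
      have h1 : Real.sin δ ≤ δ := (Real.sin_lt hδ0).le
      have h2 : (2 : ℝ) - δ^2 ≤ 2 * Real.cos δ := by
        have := Real.one_sub_sq_div_two_le_cos (x := δ); linarith
      have h3 : 2 - δ^2 ≤ m * δ := by
        have := mul_le_mul_of_nonneg_left h1 hmpos.le
        linarith
      have e : δ - 2/m - (-(δ^2/m)) = (δ*m + δ^2 - 2)/m := by
        field_simp
        ring
      have h4 : 0 ≤ (δ*m + δ^2 - 2)/m := by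
        apply div_nonneg _ hmpos.le
        linarith [mul_comm δ m]
      have h5 : δ^2 / m ≤ 2 / ((n:ℝ)+1)^2 := by
        rw [div_le_div_iff₀ hmpos (by positivity)]
        linarith
      linarith
    -- upper bound : δ - 2/m ≤ 2/(n+1)²
    have hhigh : δ - 2 / m ≤ 2 / ((n:ℝ)+1)^2 := by
      have hs := Real.sin_gt_sub_cube hδ0
      have h1 : δ - 2/m ≤ δ^3 / 4 := by linarith [pow_pos hδ0 3]
      have h2 : δ^3 ≤ δ^2 := by
        nlinarith [mul_le_mul_of_nonneg_left hδ1.le (sq_nonneg δ)]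
      have h3 : δ^2 / 4 ≤ 2 / ((n:ℝ)+1)^2 := by
        rw [div_le_div_iff₀ (by norm_num) (by positivity)]
        linarith
      linarith
    -- middle term : |2/m - 2/((n+1)π)| ≤ 2/(n+1)²
    have hmid : |2 / m - 2 / (((n:ℝ)+1) * π)| ≤ 2 / ((n:ℝ)+1)^2 := by
      have hkπpos : (0:ℝ) < ((n:ℝ)+1) * π := by positivity
      have hd1 : 2 / m - 2 / (((n:ℝ)+1) * π) = 2 * ((((n:ℝ)+1) * π - m)) / (m * (((n:ℝ)+1)*π)) := by
        rw [div_sub_div _ _ (ne_of_gt hmpos) (ne_of_gt hkπpos)]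
        ring
      have hub : (((n:ℝ)+1) * π - m) ≤ π := by
        have h : ((n:ℝ)+1) * π = (n:ℝ) * π + π := by ring
        linarith
      have hlb : 0 ≤ (((n:ℝ)+1) * π - m) := by
        have : m < ((n:ℝ)+1) * π := by push_cast at hm2; linarith [hm2]
        linarith
      rw [hd1, abs_div, abs_of_nonneg (by positivity : (0:ℝ) ≤ m * (((n:ℝ)+1)*π)),
        abs_of_nonneg (by linarith : (0:ℝ) ≤ 2 * ((((n:ℝ)+1) * π - m)))]
      rw [div_le_div_iff₀ (by positivity) (by positivity)]
      have hm_ge : (n:ℝ) + 1 ≤ m := by linarith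
      nlinarith [mul_le_mul_of_nonneg_right hub (by positivity : (0:ℝ) ≤ ((n:ℝ)+1)^2),
        mul_le_mul_of_nonneg_right hm_ge (by positivity : (0:ℝ) ≤ ((n:ℝ)+1)*π)]
    -- combine
    have hc2 : ((n + 1 : ℕ) : ℝ) = (n:ℝ) + 1 := by push_cast; ring
    rw [hc2]
    calc |δ - 2 / (((n:ℝ)+1) * π)|
        = |(δ - 2/m) + (2/m - 2 / (((n:ℝ)+1) * π))| := by congr 1; ring
      _ ≤ |δ - 2/m| + |2/m - 2 / (((n:ℝ)+1) * π)| := abs_add_le _ _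
      _ ≤ 2 / ((n:ℝ)+1)^2 + 2 / ((n:ℝ)+1)^2 := by
          refine add_le_add ?_ hmid
          rw [abs_le]; exact ⟨by linarith, hhigh⟩
      _ = 4 / ((n:ℝ)+1)^2 := by ring
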